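/- Let Q ∈ ℝ^{n×n} be symmetric positive definite, A ∈ ℝ^{m×n}, b ∈ ℝᵐ, d ∈ ℝⁿ and τ > 0. Let p, q ∈ [1, ∞] be conjugate exponents (1/p + 1/q = 1), and let ‖·‖_p and ‖·‖_q denote the corresponding ℓ_p and ℓ_q norms. If y* maximizes the concave function y ↦ −(1/2)(d + Aᵀy)ᵀ Q⁻¹ (d + Aᵀy) − bᵀ y over the set {y ∈ ℝᵐ : ‖y‖_q ≤ τ}, then u* := Q⁻¹(d + Aᵀ y*) is the unique global minimizer of u ↦ (1/2) uᵀ Q u − dᵀ u + τ‖A u + b‖_p over ℝⁿ. -/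

import Mathlib

open Matrix
open scoped ENNReal

/-- The `ℓ_p` norm of a vector in `Fin k → ℝ`, for `p ∈ [1, ∞]`. -/
noncomputable def pnorm {k : ℕ} (p : ℝ≥0∞) [Fact (1 ≤ p)] (v : Fin k → ℝ) : ℝ :=
  ‖(WithLp.equiv p (Fin k → ℝ)).symm v‖

section pn
variable {k : ℕ} {p : ℝ≥0∞} [Fact (1 ≤ p)]

lemma pnorm_nonneg (v : Fin k → ℝ) : 0 ≤ pnorm p v := norm_nonneg _

lemma pnorm_zero : pnorm p (0 : Fin k → ℝ) = 0 := by
  rw [pnorm, WithLp.equiv_symm_apply, WithLp.toLp_zero, norm_zero]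

lemma pnorm_add_le (x y : Fin k → ℝ) : pnorm p (x + y) ≤ pnorm p x + pnorm p y := by
  rw [pnorm, WithLp.equiv_symm_apply, WithLp.toLp_add]; exact norm_add_le _ _

lemma pnorm_smul (c : ℝ) (x : Fin k → ℝ) : pnorm p (c • x) = |c| * pnorm p x := by
  rw [pnorm, WithLp.equiv_symm_apply, WithLp.toLp_smul, norm_smul, Real.norm_eq_abs]; rfl

lemma pnorm_neg (x : Fin k → ℝ) : pnorm p (-x) = pnorm p x := by
  rw [← neg_one_smul ℝ x, pnorm_smul]; simp

lemma pnorm_pos {v : Fin k → ℝ} (hv : v ≠ 0) : 0 < pnorm p v := by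
  rw [pnorm]
  refine norm_pos_iff.2 fun h => hv ?_
  have := congrArg (WithLp.equiv p (Fin k → ℝ)) h
  simpa using this

lemma pnorm_eq_sum (hp : p ≠ ∞) (v : Fin k → ℝ) :
    pnorm p v = (∑ i, |v i| ^ p.toReal) ^ (1 / p.toReal) := by
  have h1 : (1 : ℝ≥0∞) ≤ p := Fact.out
  have hp0 : 0 < p.toReal := ENNReal.toReal_pos (zero_lt_one.trans_le h1).ne' hp
  rw [pnorm, PiLp.norm_eq_sum hp0]
  simp [WithLp.equiv_symm_apply, Real.norm_eq_abs]

lemma pnorm_one_eq (v : Fin k → ℝ) : pnorm 1 v = ∑ i, |v i| := by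
  rw [pnorm_eq_sum ENNReal.one_ne_top]
  simp

lemma pnorm_top_eq (v : Fin k → ℝ) : pnorm ∞ v = ⨆ i, |v i| := by
  rw [pnorm, PiLp.norm_eq_ciSup]
  simp [WithLp.equiv_symm_apply, Real.norm_eq_abs]

lemma abs_le_pnorm_top (v : Fin k → ℝ) (i : Fin k) : |v i| ≤ pnorm ∞ v := by
  rw [pnorm_top_eq]
  exact le_ciSup (f := fun j => |v j|) (Set.Finite.bddAbove (Set.finite_range _)) i
end pn

lemma conj_cases {p q : ℝ≥0∞} [Fact (1 ≤ p)] [Fact (1 ≤ q)] (hpq : 1 / p + 1 / q = 1) :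
    (p = 1 ∧ q = ∞) ∨ (p = ∞ ∧ q = 1) ∨
    (p ≠ ∞ ∧ q ≠ ∞ ∧ p.toReal.HolderConjugate q.toReal) := by
  have hp1 : (1 : ℝ≥0∞) ≤ p := Fact.out
  have hq1 : (1 : ℝ≥0∞) ≤ q := Fact.out
  have hp0 : p ≠ 0 := (zero_lt_one.trans_le hp1).ne'
  have hq0 : q ≠ 0 := (zero_lt_one.trans_le hq1).ne'
  rw [one_div, one_div] at hpq
  by_cases hp : p = 1
  · subst hp
    left
    refine ⟨rfl, ?_⟩
    rw [inv_one] at hpq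
    have h0 : (1 : ℝ≥0∞) + q⁻¹ = 1 + 0 := by simpa using hpq
    have := (ENNReal.add_right_inj ENNReal.one_ne_top).1 h0
    exact ENNReal.inv_eq_zero.1 this
  by_cases hq : q = 1
  · subst hq
    right; left
    refine ⟨?_, rfl⟩
    rw [inv_one] at hpq
    have h0 : p⁻¹ + 1 = 0 + 1 := by simpa using hpq
    have := (ENNReal.add_left_inj ENNReal.one_ne_top).1 h0
    exact ENNReal.inv_eq_zero.1 this
  right; right
  have hpt : p ≠ ∞ := by
    intro h; subst h
    rw [ENNReal.inv_top, zero_add] at hpq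
    exact hq (ENNReal.inv_eq_one.1 hpq)
  have hqt : q ≠ ∞ := by
    intro h; subst h
    rw [ENNReal.inv_top, add_zero] at hpq
    exact hp (ENNReal.inv_eq_one.1 hpq)
  refine ⟨hpt, hqt, Real.holderConjugate_iff.2 ⟨?_, ?_⟩⟩
  · exact (ENNReal.toReal_lt_toReal ENNReal.one_ne_top hpt).2 (lt_of_le_of_ne hp1 (Ne.symm hp))
  · rw [← ENNReal.toReal_inv, ← ENNReal.toReal_inv, ← ENNReal.toReal_add
      (ENNReal.inv_ne_top.2 hp0) (ENNReal.inv_ne_top.2 hq0), hpq, ENNReal.toReal_one]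

lemma pnorm_holder {k : ℕ} {p q : ℝ≥0∞} [Fact (1 ≤ p)] [Fact (1 ≤ q)] (hpq : 1 / p + 1 / q = 1)
    (x y : Fin k → ℝ) : x ⬝ᵥ y ≤ pnorm p x * pnorm q y := by
  have one_top : ∀ (a b : Fin k → ℝ), a ⬝ᵥ b ≤ pnorm 1 a * pnorm ∞ b := by
    intro a b
    rw [pnorm_one_eq, dotProduct, Finset.sum_mul]
    refine Finset.sum_le_sum fun i _ => ?_
    calc a i * b i ≤ |a i * b i| := le_abs_self _
      _ = |a i| * |b i| := abs_mul _ _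
      _ ≤ |a i| * pnorm ∞ b := mul_le_mul_of_nonneg_left (abs_le_pnorm_top b i) (abs_nonneg _)
  rcases conj_cases hpq with ⟨hp, hq⟩ | ⟨hp, hq⟩ | ⟨hp, hq, hc⟩
  · subst hp; subst hq; exact one_top x y
  · subst hp; subst hq; rw [dotProduct_comm, mul_comm]; exact one_top y x
  · rw [pnorm_eq_sum hp, pnorm_eq_sum hq]
    have := Real.inner_le_Lp_mul_Lq Finset.univ x y hc
    simpa [dotProduct] using this

lemma pnorm_dual_attain {k : ℕ} {p q : ℝ≥0∞} [Fact (1 ≤ p)] [Fact (1 ≤ q)]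
    (hpq : 1 / p + 1 / q = 1) (v : Fin k → ℝ) :
    ∃ y : Fin k → ℝ, pnorm q y ≤ 1 ∧ y ⬝ᵥ v = pnorm p v := by
  classical
  set sgn : Fin k → ℝ := fun i => if v i < 0 then -1 else 1 with hsgn
  have hsv : ∀ i, sgn i * v i = |v i| := by
    intro i; by_cases h : v i < 0
    · simp [hsgn, h, abs_of_neg h]
    · simp [hsgn, h, abs_of_nonneg (not_lt.1 h)]
  have habs : ∀ i, |sgn i| = 1 := by
    intro i; by_cases h : v i < 0 <;> simp [hsgn, h]
  rcases conj_cases hpq with ⟨hp, hq⟩ | ⟨hp, hq⟩ | ⟨hp, hq, hc⟩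
  · -- p = 1, q = ∞ : take y = sgn
    subst hp; subst hq
    refine ⟨sgn, ?_, ?_⟩
    · rw [pnorm_top_eq]
      exact Real.iSup_le (fun i => by rw [habs]) zero_le_one
    · rw [pnorm_one_eq, dotProduct]
      exact Finset.sum_congr rfl fun i _ => hsv i
  · -- p = ∞, q = 1
    subst hp; subst hq
    rcases isEmpty_or_nonempty (Fin k) with he | hne
    · refine ⟨0, ?_, ?_⟩
      · rw [pnorm_one_eq]; simp
      · rw [zero_dotProduct, pnorm_top_eq, Real.iSup_of_isEmpty]
    · haveI := hne
      obtain ⟨i, -, hi⟩ := Finset.exists_max_image Finset.univ (fun j => |v j|)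
        Finset.univ_nonempty
      refine ⟨(Pi.single (M := fun _ : Fin k => ℝ) i (sgn i)), ?_, ?_⟩
      · rw [pnorm_one_eq]
        have h1 : ∀ j, |Pi.single (M := fun _ : Fin k => ℝ) i (sgn i) j| = if j = i then 1 else 0 := by
          intro j; by_cases h : j = i <;> simp [Pi.single_apply, h, habs]
        rw [Finset.sum_congr rfl fun j _ => h1 j]
        simp
      · rw [single_dotProduct, hsv, pnorm_top_eq]
        refine le_antisymm ?_ ?_
        · exact le_ciSup (f := fun j => |v j|) (Set.Finite.bddAbove (Set.finite_range _)) i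
        · exact Real.iSup_le (fun j => hi j (Finset.mem_univ j)) (abs_nonneg _)
  · -- 1 < p < ∞
    by_cases hv : v = 0
    · exact ⟨0, by rw [pnorm_zero]; exact zero_le_one,
        by rw [zero_dotProduct, hv, pnorm_zero]⟩
    set r := p.toReal with hrdef
    set s := q.toReal with hsdef
    have hr0 : 0 < r := Real.HolderTriple.left_pos hc
    have hN : 0 < pnorm p v := pnorm_pos hv
    set N := pnorm p v with hNdef
    have hsum : ∑ i, |v i| ^ r = N ^ r := by
      rw [hNdef, pnorm_eq_sum hp, ← hrdef,
        ← Real.rpow_mul (Finset.sum_nonneg fun i _ => Real.rpow_nonneg (abs_nonneg _) _),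
        one_div, inv_mul_cancel₀ hr0.ne', Real.rpow_one]
    refine ⟨fun i => sgn i * (|v i| ^ (r - 1) / N ^ (r - 1)), ?_, ?_⟩
    · rw [pnorm_eq_sum hq, ← hsdef]
      have hyabs : ∀ i, |sgn i * (|v i| ^ (r - 1) / N ^ (r - 1))| ^ s = |v i| ^ r / N ^ r := by
        intro i
        rw [abs_mul, habs, one_mul,
          abs_of_nonneg (div_nonneg (Real.rpow_nonneg (abs_nonneg _) _)
            (Real.rpow_nonneg hN.le _)),
          Real.div_rpow (Real.rpow_nonneg (abs_nonneg _) _) (Real.rpow_nonneg hN.le _),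
          ← Real.rpow_mul (abs_nonneg _), ← Real.rpow_mul hN.le, hc.sub_one_mul_conj]
      rw [Finset.sum_congr rfl fun i _ => hyabs i, ← Finset.sum_div, hsum,
        div_self (Real.rpow_pos_of_pos hN r).ne', Real.one_rpow]
    · rw [dotProduct]
      have hterm : ∀ i, sgn i * (|v i| ^ (r - 1) / N ^ (r - 1)) * v i
          = |v i| ^ r / N ^ (r - 1) := by
        intro i
        by_cases h0 : v i = 0
        · simp [h0, Real.zero_rpow hr0.ne', Real.zero_rpow hc.sub_one_ne_zero]
        · have habs0 : (0:ℝ) < |v i| := abs_pos.2 h0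
          rw [mul_comm (sgn i) _, mul_assoc, hsv i, div_mul_eq_mul_div,
            ← Real.rpow_add_one habs0.ne', sub_add_cancel]
      rw [Finset.sum_congr rfl fun i _ => hterm i, ← Finset.sum_div, hsum,
        ← Real.rpow_sub hN, sub_sub_cancel, Real.rpow_one]

/-- Primal objective `u ↦ (1/2)uᵀQu − dᵀu + τ‖Au + b‖_p`. -/
noncomputable def primalObj {m n : ℕ} (Q : Matrix (Fin n) (Fin n) ℝ)
    (A : Matrix (Fin m) (Fin n) ℝ) (b : Fin m → ℝ) (d : Fin n → ℝ) (τ : ℝ)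
    (p : ℝ≥0∞) [Fact (1 ≤ p)] (u : Fin n → ℝ) : ℝ :=
  1 / 2 * (u ⬝ᵥ Q.mulVec u) - d ⬝ᵥ u + τ * pnorm p (A.mulVec u + b)

/-- Dual objective `y ↦ −(1/2)(d + Aᵀy)ᵀ Q⁻¹ (d + Aᵀy) − bᵀy`. -/
noncomputable def dualObj {m n : ℕ} (Q : Matrix (Fin n) (Fin n) ℝ)
    (A : Matrix (Fin m) (Fin n) ℝ) (b : Fin m → ℝ) (d : Fin n → ℝ)
    (y : Fin m → ℝ) : ℝ :=
  -(1 / 2) * ((d + Aᵀ.mulVec y) ⬝ᵥ Q⁻¹.mulVec (d + Aᵀ.mulVec y)) - b ⬝ᵥ y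

/-- **Theorem `th::thProx-dual` (primal recovery from a dual solution).**
If `y*` maximizes the dual objective over `{y : ‖y‖_q ≤ τ}` (with `1/p + 1/q = 1`), then
`u* = Q⁻¹(d + Aᵀy*)` is the unique global minimizer of
`u ↦ (1/2)uᵀQu − dᵀu + τ‖Au + b‖_p`. -/
theorem stmt_11 {m n : ℕ} (Q : Matrix (Fin n) (Fin n) ℝ) (hQ : Q.PosDef)
    (A : Matrix (Fin m) (Fin n) ℝ) (b : Fin m → ℝ) (d : Fin n → ℝ)
    (τ : ℝ) (hτ : 0 < τ)
    (p q : ℝ≥0∞) [Fact (1 ≤ p)] [Fact (1 ≤ q)] (hpq : 1 / p + 1 / q = 1)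
    (ystar : Fin m → ℝ) (hfeas : pnorm q ystar ≤ τ)
    (hmax : ∀ y : Fin m → ℝ, pnorm q y ≤ τ → dualObj Q A b d y ≤ dualObj Q A b d ystar) :
    ∀ u : Fin n → ℝ, u ≠ Q⁻¹.mulVec (d + Aᵀ.mulVec ystar) →
      primalObj Q A b d τ p (Q⁻¹.mulVec (d + Aᵀ.mulVec ystar)) < primalObj Q A b d τ p u := by
  classical
  intro u hu
  have hdet : IsUnit Q.det := hQ.det_pos.ne'.isUnit
  have hQsymm : Qᵀ = Q := by
    have := hQ.1
    rwa [Matrix.IsHermitian, Matrix.conjTranspose_eq_transpose_of_trivial] at this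
  have hMsymm : Q⁻¹ᵀ = Q⁻¹ := by rw [Matrix.transpose_nonsing_inv, hQsymm]
  set ustar := Q⁻¹.mulVec (d + Aᵀ.mulVec ystar) with hustar
  have hQu : Q.mulVec ustar = d + Aᵀ.mulVec ystar := by
    rw [hustar, Matrix.mulVec_mulVec, Matrix.mul_nonsing_inv _ hdet, Matrix.one_mulVec]
  set v := A.mulVec ustar + b with hvdef
  have hsym : ∀ (S : Matrix (Fin n) (Fin n) ℝ), Sᵀ = S →
      ∀ a c : Fin n → ℝ, a ⬝ᵥ S.mulVec c = c ⬝ᵥ S.mulVec a := by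
    intro S hS a c
    rw [Matrix.dotProduct_mulVec, ← Matrix.mulVec_transpose, hS, dotProduct_comm]
  have hAdot : ∀ (y : Fin m → ℝ) (x : Fin n → ℝ),
      (Aᵀ.mulVec y) ⬝ᵥ x = y ⬝ᵥ A.mulVec x := by
    intro y x; rw [Matrix.mulVec_transpose, ← Matrix.dotProduct_mulVec]
  -- Step A : variational inequality
  have hVI : ∀ y : Fin m → ℝ, pnorm q y ≤ τ → v ⬝ᵥ ystar ≤ v ⬝ᵥ y := by
    intro y hy
    set w := y - ystar with hwdef
    set a := Aᵀ.mulVec w with hadef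
    set kk := a ⬝ᵥ Q⁻¹.mulVec a with hkkdef
    have hkk : 0 ≤ kk := by
      have := hQ.inv.posSemidef.dotProduct_mulVec_nonneg a
      simpa [hkkdef] using this
    have key : ∀ t : ℝ, 0 < t → t ≤ 1 → -(t * kk / 2) ≤ v ⬝ᵥ w := by
      intro t ht0 ht1
      have hyt : pnorm q (ystar + t • w) ≤ τ := by
        have heq : ystar + t • w = (1 - t) • ystar + t • y := by
          funext i
          simp [hwdef, smul_eq_mul]
          ring
        calc pnorm q (ystar + t • w) ≤ pnorm q ((1 - t) • ystar) + pnorm q (t • y) := by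
              rw [heq]; exact pnorm_add_le _ _
          _ = (1 - t) * pnorm q ystar + t * pnorm q y := by
              rw [pnorm_smul, pnorm_smul, abs_of_nonneg (by linarith), abs_of_nonneg ht0.le]
          _ ≤ (1 - t) * τ + t * τ := by
              have h1 : (1 - t) * pnorm q ystar ≤ (1 - t) * τ :=
                mul_le_mul_of_nonneg_left hfeas (by linarith)
              have h2 : t * pnorm q y ≤ t * τ := mul_le_mul_of_nonneg_left hy ht0.le
              linarith
          _ = τ := by ring
      have hle := hmax (ystar + t • w) hyt
      -- expand `dualObj` at `ystar + t • w`
      have hexp : dualObj Q A b d (ystar + t • w) =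
          dualObj Q A b d ystar - t * (v ⬝ᵥ w) - t ^ 2 / 2 * kk := by
        have hlin : d + Aᵀ.mulVec (ystar + t • w) = (d + Aᵀ.mulVec ystar) + t • a := by
          rw [Matrix.mulVec_add, Matrix.mulVec_smul, hadef]
          abel
        have he2 : a ⬝ᵥ Q⁻¹.mulVec (d + Aᵀ.mulVec ystar) =
            (d + Aᵀ.mulVec ystar) ⬝ᵥ Q⁻¹.mulVec a :=
          hsym _ hMsymm _ _
        have he3 : (d + Aᵀ.mulVec ystar) ⬝ᵥ Q⁻¹.mulVec a + b ⬝ᵥ w = v ⬝ᵥ w := by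
          have h4 : (d + Aᵀ.mulVec ystar) ⬝ᵥ Q⁻¹.mulVec a
              = a ⬝ᵥ ustar := by
            rw [hsym _ hMsymm, ← hustar, dotProduct_comm]
          rw [h4, hadef, hAdot, hvdef, add_dotProduct, dotProduct_comm]
        rw [dualObj, dualObj, hlin]
        simp only [Matrix.mulVec_add, Matrix.mulVec_smul, dotProduct_add,
          add_dotProduct, dotProduct_smul, smul_dotProduct,
          smul_eq_mul] at he2 he3 ⊢
        linear_combination (-(1/2) * t) * he2 + (-t) * he3 + (t ^ 2 / 2) * hkkdef
      rw [hexp] at hle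
      have h5 : -(t ^ 2 / 2 * kk) ≤ t * (v ⬝ᵥ w) := by linarith
      nlinarith [h5, ht0]
    by_contra hcon
    push_neg at hcon
    have hc : v ⬝ᵥ w < 0 := by
      have : v ⬝ᵥ y - v ⬝ᵥ ystar = v ⬝ᵥ w := by
        rw [hwdef, dotProduct_sub]
      linarith
    set t := min 1 ((-(v ⬝ᵥ w)) / (kk + 1)) with htdef
    have ht0 : 0 < t := lt_min zero_lt_one (div_pos (by linarith) (by linarith))
    have ht1 : t ≤ 1 := min_le_left _ _
    have ht2 : t ≤ (-(v ⬝ᵥ w)) / (kk + 1) := min_le_right _ _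
    have hk := key t ht0 ht1
    have : t * (kk + 1) ≤ -(v ⬝ᵥ w) := by
      rw [← le_div_iff₀ (by linarith : (0:ℝ) < kk + 1)]
      exact ht2
    nlinarith
  -- Step B : complementarity
  obtain ⟨y0, hy0n, hy0v⟩ := pnorm_dual_attain hpq v
  have hNnn : 0 ≤ pnorm p v := pnorm_nonneg v
  have hfe : pnorm q ((-τ) • y0) ≤ τ := by
    rw [pnorm_smul, abs_neg, abs_of_pos hτ]
    nlinarith [hy0n, pnorm_nonneg (p := q) y0]
  have h1 : v ⬝ᵥ ystar ≤ -(τ * pnorm p v) := by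
    have hvi := hVI ((-τ) • y0) hfe
    have hdot : v ⬝ᵥ ((-τ) • y0) = -(τ * pnorm p v) := by
      rw [dotProduct_smul, smul_eq_mul, dotProduct_comm, hy0v]
      ring
    linarith [hvi, hdot.le, hdot.ge]
  have h2 : -(τ * pnorm p v) ≤ v ⬝ᵥ ystar := by
    have hh := pnorm_holder hpq (-v) ystar
    rw [pnorm_neg, neg_dotProduct] at hh
    have hmm : pnorm p v * pnorm q ystar ≤ pnorm p v * τ :=
      mul_le_mul_of_nonneg_left hfeas hNnn
    nlinarith [hh, hmm]
  have hcomp : v ⬝ᵥ ystar = -(τ * pnorm p v) := le_antisymm h1 h2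
  -- Step C : strong convexity argument
  have hval : τ * pnorm p v = -(ystar ⬝ᵥ v) := by
    rw [dotProduct_comm ystar v, hcomp]; ring
  have hlow : -(ystar ⬝ᵥ (A.mulVec u + b)) ≤ τ * pnorm p (A.mulVec u + b) := by
    have hh := pnorm_holder hpq (A.mulVec u + b) (-ystar)
    rw [pnorm_neg, dotProduct_neg] at hh
    have hmm : pnorm p (A.mulVec u + b) * pnorm q ystar
        ≤ pnorm p (A.mulVec u + b) * τ :=
      mul_le_mul_of_nonneg_left hfeas (pnorm_nonneg _)
    have hcd : ystar ⬝ᵥ (A.mulVec u + b) = (A.mulVec u + b) ⬝ᵥ ystar :=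
      dotProduct_comm _ _
    nlinarith [hh, hmm, hcd.le, hcd.ge]
  have hβ' : u ⬝ᵥ Q.mulVec ustar = ustar ⬝ᵥ Q.mulVec u := hsym Q hQsymm u ustar
  have hpos : 0 < u ⬝ᵥ Q.mulVec u - 2 * (ustar ⬝ᵥ Q.mulVec u) + ustar ⬝ᵥ Q.mulVec ustar := by
    have hne : u - ustar ≠ 0 := sub_ne_zero.2 hu
    have hposdef := hQ.dotProduct_mulVec_pos hne
    simp only [star_trivial] at hposdef
    rw [Matrix.mulVec_sub, sub_dotProduct, dotProduct_sub,
      dotProduct_sub, hβ'] at hposdef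
    linarith
  have hgu : d ⬝ᵥ u + ystar ⬝ᵥ A.mulVec u = ustar ⬝ᵥ Q.mulVec u := by
    have h0 : (d + Aᵀ.mulVec ystar) ⬝ᵥ u = ustar ⬝ᵥ Q.mulVec u := by
      rw [← hQu, dotProduct_comm, hβ']
    rw [← h0, add_dotProduct, hAdot]
  have hgus : d ⬝ᵥ ustar + ystar ⬝ᵥ A.mulVec ustar = ustar ⬝ᵥ Q.mulVec ustar := by
    have h0 : (d + Aᵀ.mulVec ystar) ⬝ᵥ ustar = ustar ⬝ᵥ Q.mulVec ustar := by
      rw [← hQu, dotProduct_comm]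
    rw [← h0, add_dotProduct, hAdot]
  have e1 : ystar ⬝ᵥ (A.mulVec u + b) = ystar ⬝ᵥ A.mulVec u + ystar ⬝ᵥ b :=
    dotProduct_add _ _ _
  have e2 : ystar ⬝ᵥ v = ystar ⬝ᵥ A.mulVec ustar + ystar ⬝ᵥ b := by
    rw [hvdef, dotProduct_add]
  rw [primalObj, primalObj, ← hvdef]
  linarith [hlow, hval, hgu, hgus, e1, e2, hpos]
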